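/- arXiv:quant-ph/0311136 — 2 statements merged into one kernel-verified Lean document; each statement's English description precedes it below -/
import Mathlib

section
/- For density matrices on finite-dimensional Hilbert spaces, the quantum mutual information I(X:Y) = S(X) + S(Y) - S(XY) is nonnegative, where S denotes the von Neumann entropy and the marginal states are obtained by partial trace. -/
open scoped Classical
open Matrix Kronecker ComplexOrder

/-- Von Neumann entropy `S(ρ) = -Tr(ρ log ρ)`, computed via the eigenvalues of a
Hermitian matrix: `S(ρ) = ∑ᵢ -λᵢ log λᵢ`. -/
noncomputable def vnEntropy {n : Type*} [Fintype n] [DecidableEq n] (ρ : Matrix n n ℂ) : ℝ :=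
  if h : ρ.IsHermitian then ∑ i, Real.negMulLog (h.eigenvalues i) else 0

/-- A density matrix: positive semidefinite with trace one. -/
def IsDensityMatrix {n : Type*} [Fintype n] [DecidableEq n] (ρ : Matrix n n ℂ) : Prop :=
  ρ.PosSemidef ∧ ρ.trace = 1

/-- Partial trace over the second (right) tensor factor. -/
noncomputable def ptraceRight {m n : Type*} [Fintype m] [Fintype n]
    (ρ : Matrix (m × n) (m × n) ℂ) : Matrix m m ℂ :=
  Matrix.of fun i j => ∑ k, ρ (i, k) (j, k)

/-- Partial trace over the first (left) tensor factor. -/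
noncomputable def ptraceLeft {m n : Type*} [Fintype m] [Fintype n]
    (ρ : Matrix (m × n) (m × n) ℂ) : Matrix n n ℂ :=
  Matrix.of fun i j => ∑ k, ρ (k, i) (k, j)

/-- A unit vector (pure state amplitude vector). -/
def IsUnitVec {n : Type*} [Fintype n] (ψ : n → ℂ) : Prop := ∑ i, ‖ψ i‖ ^ 2 = 1

/-! ### Auxiliary real-analytic lemmas -/

lemma klein_aux {K M : Type*} [Fintype K] [Fintype M]
    (p : K → ℝ) (q : M → ℝ) (P : M → K → ℝ)
    (hp : ∀ k, 0 ≤ p k) (hq : ∀ m, 0 ≤ q m) (hP : ∀ m k, 0 ≤ P m k)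
    (hrow : ∀ m, ∑ k, P m k = 1) (hcol : ∀ k, ∑ m, P m k = 1)
    (hps : ∑ k, p k = 1) (hqs : ∑ m, q m = 1)
    (hsupp : ∀ m, q m = 0 → ∀ k, P m k * p k = 0) :
    ∑ m, (∑ k, P m k * p k) * Real.log (q m) ≤ ∑ k, p k * Real.log (p k) := by
  have key : ∀ m k, P m k * p k * (Real.log (q m) - Real.log (p k))
      ≤ P m k * q m - P m k * p k := by
    intro m k
    rcases eq_or_lt_of_le (hp k) with h0 | hpk
    · rw [← h0]; simpa using mul_nonneg (hP m k) (hq m)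
    rcases eq_or_lt_of_le (hq m) with h0 | hqm
    · have h1 := hsupp m h0.symm k
      rw [h1, ← h0, mul_zero, zero_mul]; linarith
    · have hlog : Real.log (q m) - Real.log (p k) ≤ q m / p k - 1 := by
        rw [← Real.log_div (ne_of_gt hqm) (ne_of_gt hpk)]
        exact Real.log_le_sub_one_of_pos (div_pos hqm hpk)
      have h2 : (0:ℝ) ≤ P m k * p k := mul_nonneg (hP m k) (le_of_lt hpk)
      calc P m k * p k * (Real.log (q m) - Real.log (p k))
          ≤ P m k * p k * (q m / p k - 1) := mul_le_mul_of_nonneg_left hlog h2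
        _ = P m k * q m - P m k * p k := by field_simp
  have main : ∑ m, ∑ k, P m k * p k * (Real.log (q m) - Real.log (p k))
      ≤ ∑ m, ∑ k, (P m k * q m - P m k * p k) :=
    Finset.sum_le_sum fun m _ => Finset.sum_le_sum fun k _ => key m k
  have hz : ∑ m, ∑ k, (P m k * q m - P m k * p k) = 0 := by
    have e1 : ∀ m : M, ∑ k, P m k * q m = q m := by
      intro m; rw [← Finset.sum_mul, hrow, one_mul]
    have e2 : ∀ k : K, ∑ m, P m k * p k = p k := by
      intro k; rw [← Finset.sum_mul, hcol, one_mul]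
    have : ∑ m, ∑ k, (P m k * q m - P m k * p k)
        = (∑ m, ∑ k, P m k * q m) - (∑ m, ∑ k, P m k * p k) := by
      simp [Finset.sum_sub_distrib]
    rw [this]
    rw [Finset.sum_congr rfl fun m _ => e1 m, Finset.sum_comm,
      Finset.sum_congr rfl fun k _ => e2 k, hps, hqs, sub_self]
  have expand : ∑ m, ∑ k, P m k * p k * (Real.log (q m) - Real.log (p k))
      = (∑ m, (∑ k, P m k * p k) * Real.log (q m))
        - (∑ m, ∑ k, P m k * (p k * Real.log (p k))) := by
    simp [mul_sub, Finset.sum_sub_distrib, Finset.sum_mul, mul_assoc]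
  have rhs_eq : ∑ k, p k * Real.log (p k)
      = ∑ m, ∑ k, P m k * (p k * Real.log (p k)) := by
    rw [Finset.sum_comm]
    exact (Finset.sum_congr rfl fun k _ => by rw [← Finset.sum_mul, hcol, one_mul]).symm
  rw [hz] at main
  rw [expand] at main
  linarith [main]

lemma sum_mul_log_prod {X Y : Type*} [Fintype X] [Fintype Y]
    (a : X → ℝ) (b : Y → ℝ) (c : X × Y → ℝ)
    (hc0 : ∀ i j, a i * b j = 0 → c (i, j) = 0)
    (hca : ∀ i, ∑ j, c (i, j) = a i) (hcb : ∀ j, ∑ i, c (i, j) = b j) :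
    ∑ m : X × Y, c m * Real.log (a m.1 * b m.2)
      = ∑ i, a i * Real.log (a i) + ∑ j, b j * Real.log (b j) := by
  have step : ∀ m : X × Y, c m * Real.log (a m.1 * b m.2)
      = c m * Real.log (a m.1) + c m * Real.log (b m.2) := by
    rintro ⟨i, j⟩
    by_cases ha : a i = 0
    · simp [hc0 i j (by simp [ha])]
    by_cases hb : b j = 0
    · simp [hc0 i j (by simp [hb])]
    rw [Real.log_mul ha hb]; ring
  rw [Finset.sum_congr rfl fun m _ => step m, Finset.sum_add_distrib]
  congr 1
  · rw [Fintype.sum_prod_type]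
    exact Finset.sum_congr rfl fun i _ => by simp only []; rw [← Finset.sum_mul, hca]
  · rw [Fintype.sum_prod_type_right]
    exact Finset.sum_congr rfl fun j _ => by simp only []; rw [← Finset.sum_mul, hcb]

/-! ### Auxiliary matrix lemmas -/

lemma ptraceRight_conj {X Y : Type*} [Fintype X] [Fintype Y]
    [DecidableEq X] [DecidableEq Y]
    (M : Matrix (X × Y) (X × Y) ℂ) (P R : Matrix X X ℂ) (Q S : Matrix Y Y ℂ)
    (hQS : S * Q = 1) :
    ptraceRight ((P ⊗ₖ Q) * M * (R ⊗ₖ S)) = P * ptraceRight M * R := by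
  ext i i'
  simp only [ptraceRight, of_apply, Matrix.mul_apply, kroneckerMap_apply,
    Fintype.sum_prod_type, Finset.sum_mul, Finset.mul_sum]
  calc ∑ j : Y, ∑ x' : X, ∑ y' : Y, ∑ x : X, ∑ y : Y,
        P i x * Q j y * M (x, y) (x', y') * (R x' i' * S y' j)
      = ∑ x' : X, ∑ y' : Y, ∑ x : X, ∑ y : Y,
        (P i x * M (x, y) (x', y') * R x' i') * ((S * Q) y' y) := by
        rw [Finset.sum_comm]
        refine Finset.sum_congr rfl fun x' _ => ?_
        rw [Finset.sum_comm]
        refine Finset.sum_congr rfl fun y' _ => ?_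
        rw [Finset.sum_comm]
        refine Finset.sum_congr rfl fun x _ => ?_
        rw [Finset.sum_comm]
        refine Finset.sum_congr rfl fun y _ => ?_
        rw [Matrix.mul_apply, Finset.mul_sum]
        exact Finset.sum_congr rfl fun j _ => by ring
    _ = ∑ x' : X, ∑ x : X, ∑ y : Y, P i x * M (x, y) (x', y) * R x' i' := by
        rw [hQS]
        refine Finset.sum_congr rfl fun x' _ => ?_
        rw [Finset.sum_comm]
        refine Finset.sum_congr rfl fun x _ => ?_
        simp [Matrix.one_apply, mul_ite, mul_one, mul_zero]

lemma ptraceLeft_conj {X Y : Type*} [Fintype X] [Fintype Y]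
    [DecidableEq X] [DecidableEq Y]
    (M : Matrix (X × Y) (X × Y) ℂ) (P R : Matrix X X ℂ) (Q S : Matrix Y Y ℂ)
    (hRP : R * P = 1) :
    ptraceLeft ((P ⊗ₖ Q) * M * (R ⊗ₖ S)) = Q * ptraceLeft M * S := by
  ext j j'
  simp only [ptraceLeft, of_apply, Matrix.mul_apply, kroneckerMap_apply,
    Fintype.sum_prod_type, Finset.sum_mul, Finset.mul_sum]
  calc ∑ i : X, ∑ x' : X, ∑ y' : Y, ∑ x : X, ∑ y : Y,
        P i x * Q j y * M (x, y) (x', y') * (R x' i * S y' j')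
      = ∑ x' : X, ∑ y' : Y, ∑ x : X, ∑ y : Y,
        (Q j y * M (x, y) (x', y') * S y' j') * ((R * P) x' x) := by
        rw [Finset.sum_comm]
        refine Finset.sum_congr rfl fun x' _ => ?_
        rw [Finset.sum_comm]
        refine Finset.sum_congr rfl fun y' _ => ?_
        rw [Finset.sum_comm]
        refine Finset.sum_congr rfl fun x _ => ?_
        rw [Finset.sum_comm]
        refine Finset.sum_congr rfl fun y _ => ?_
        rw [Matrix.mul_apply, Finset.mul_sum]
        exact Finset.sum_congr rfl fun i _ => by ring
    _ = ∑ y' : Y, ∑ x : X, ∑ y : Y, Q j y * M (x, y) (x, y') * S y' j' := by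
        rw [hRP, Finset.sum_comm]
        refine Finset.sum_congr rfl fun y' _ => ?_
        rw [Finset.sum_comm]
        refine Finset.sum_congr rfl fun x _ => ?_
        rw [Finset.sum_comm]
        simp [Matrix.one_apply, mul_ite, mul_one, mul_zero]
    _ = ∑ y' : Y, ∑ y : Y, ∑ x : X, Q j y * M (x, y) (x, y') * S y' j' :=
        Finset.sum_congr rfl fun y' _ => Finset.sum_comm

lemma ptraceRight_isHermitian {X Y : Type*} [Fintype X] [Fintype Y]
    {ρ : Matrix (X × Y) (X × Y) ℂ} (h : ρ.IsHermitian) :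
    (ptraceRight ρ).IsHermitian := by
  ext i j
  simp only [conjTranspose_apply, ptraceRight, of_apply, star_sum]
  exact Finset.sum_congr rfl fun k _ => h.apply _ _

lemma ptraceLeft_isHermitian {X Y : Type*} [Fintype X] [Fintype Y]
    {ρ : Matrix (X × Y) (X × Y) ℂ} (h : ρ.IsHermitian) :
    (ptraceLeft ρ).IsHermitian := by
  ext i j
  simp only [conjTranspose_apply, ptraceLeft, of_apply, star_sum]
  exact Finset.sum_congr rfl fun k _ => h.apply _ _

lemma ptraceRight_posSemidef {X Y : Type*} [Fintype X] [Fintype Y]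
    {ρ : Matrix (X × Y) (X × Y) ℂ} (h : ρ.PosSemidef) :
    (ptraceRight ρ).PosSemidef := by
  refine PosSemidef.of_dotProduct_mulVec_nonneg (ptraceRight_isHermitian h.1) fun x => ?_
  have key : star x ⬝ᵥ (ptraceRight ρ) *ᵥ x
      = ∑ k : Y, star (fun m : X × Y => if m.2 = k then x m.1 else 0) ⬝ᵥ
          ρ *ᵥ (fun m : X × Y => if m.2 = k then x m.1 else 0) := by
    simp only [dotProduct, mulVec, ptraceRight, of_apply, Pi.star_apply,
      apply_ite (star : ℂ → ℂ), star_zero,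
      Fintype.sum_prod_type, mul_ite, ite_mul, zero_mul, mul_zero,
      Finset.sum_ite_irrel, Finset.sum_const_zero,
      Finset.sum_ite_eq', Finset.mem_univ, if_true, Finset.mul_sum, Finset.sum_mul]
    exact (Finset.sum_congr rfl fun x1 _ => Finset.sum_comm).trans Finset.sum_comm
  rw [key]
  exact Finset.sum_nonneg fun k _ => h.dotProduct_mulVec_nonneg _

lemma ptraceLeft_posSemidef {X Y : Type*} [Fintype X] [Fintype Y]
    {ρ : Matrix (X × Y) (X × Y) ℂ} (h : ρ.PosSemidef) :
    (ptraceLeft ρ).PosSemidef := by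
  refine PosSemidef.of_dotProduct_mulVec_nonneg (ptraceLeft_isHermitian h.1) fun x => ?_
  have key : star x ⬝ᵥ (ptraceLeft ρ) *ᵥ x
      = ∑ k : X, star (fun m : X × Y => if m.1 = k then x m.2 else 0) ⬝ᵥ
          ρ *ᵥ (fun m : X × Y => if m.1 = k then x m.2 else 0) := by
    simp only [dotProduct, mulVec, ptraceLeft, of_apply, Pi.star_apply,
      apply_ite (star : ℂ → ℂ), star_zero,
      Fintype.sum_prod_type, mul_ite, ite_mul, zero_mul, mul_zero,
      Finset.sum_ite_irrel, Finset.sum_const_zero,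
      Finset.sum_ite_eq', Finset.mem_univ, if_true, Finset.mul_sum, Finset.sum_mul]
    exact (Finset.sum_congr rfl fun x1 _ => Finset.sum_comm).trans Finset.sum_comm
  rw [key]
  exact Finset.sum_nonneg fun k _ => h.dotProduct_mulVec_nonneg _

lemma ptraceRight_trace {X Y : Type*} [Fintype X] [Fintype Y]
    (ρ : Matrix (X × Y) (X × Y) ℂ) : (ptraceRight ρ).trace = ρ.trace := by
  simp [ptraceRight, Matrix.trace, Matrix.diag, Fintype.sum_prod_type]

lemma ptraceLeft_trace {X Y : Type*} [Fintype X] [Fintype Y]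
    (ρ : Matrix (X × Y) (X × Y) ℂ) : (ptraceLeft ρ).trace = ρ.trace := by
  simp only [ptraceLeft, Matrix.trace, Matrix.diag, of_apply, Fintype.sum_prod_type]
  exact Finset.sum_comm

/-- Sum of eigenvalues equals the (real) trace. -/
lemma sum_eigenvalues_eq_one {n : Type*} [Fintype n] [DecidableEq n]
    {A : Matrix n n ℂ} (hA : A.IsHermitian) (h1 : A.trace = 1) :
    ∑ i, hA.eigenvalues i = 1 := by
  have hspec : A = (Matrix.IsHermitian.eigenvectorUnitary hA : Matrix n n ℂ) *
      Matrix.diagonal (RCLike.ofReal ∘ hA.eigenvalues) *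
      star (Matrix.IsHermitian.eigenvectorUnitary hA : Matrix n n ℂ) := hA.spectral_theorem
  have hU1 : star ((Matrix.IsHermitian.eigenvectorUnitary hA : Matrix n n ℂ))
      * (Matrix.IsHermitian.eigenvectorUnitary hA : Matrix n n ℂ) = 1 :=
    Matrix.mem_unitaryGroup_iff'.mp (Matrix.IsHermitian.eigenvectorUnitary hA).2
  have key : (↑(∑ i, hA.eigenvalues i) : ℂ) = 1 := by
    push_cast
    calc ∑ i, (hA.eigenvalues i : ℂ)
        = (Matrix.diagonal (RCLike.ofReal ∘ hA.eigenvalues)).trace := by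
          simp [Matrix.trace_diagonal]
      _ = A.trace := by
          conv_rhs => rw [hspec]
          rw [Matrix.trace_mul_cycle, hU1, Matrix.one_mul]
      _ = 1 := h1
  exact_mod_cast key

/-! ### Main theorem -/

/-- nonnegativity of quantum mutual information
`I(X:Y) = S(X) + S(Y) - S(XY) ≥ 0` (subadditivity of von Neumann entropy). -/
theorem mutual_information_nonneg {X Y : Type*} [Fintype X] [Fintype Y]
    [DecidableEq X] [DecidableEq Y]
    (ρ : Matrix (X × Y) (X × Y) ℂ) (hρ : IsDensityMatrix ρ) :
    0 ≤ vnEntropy (ptraceRight ρ) + vnEntropy (ptraceLeft ρ) - vnEntropy ρ := by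
  obtain ⟨hPSD, htr⟩ := hρ
  have hH : ρ.IsHermitian := hPSD.1
  have hXpsd := ptraceRight_posSemidef hPSD
  have hYpsd := ptraceLeft_posSemidef hPSD
  have hHX : (ptraceRight ρ).IsHermitian := hXpsd.1
  have hHY : (ptraceLeft ρ).IsHermitian := hYpsd.1
  set p := hH.eigenvalues with hp_def
  set a := hHX.eigenvalues with ha_def
  set b := hHY.eigenvalues with hb_def
  set U : Matrix (X × Y) (X × Y) ℂ :=
    (Matrix.IsHermitian.eigenvectorUnitary hH : Matrix (X × Y) (X × Y) ℂ) with hU_def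
  set V : Matrix X X ℂ := (Matrix.IsHermitian.eigenvectorUnitary hHX : Matrix X X ℂ) with hV_def
  set W : Matrix Y Y ℂ := (Matrix.IsHermitian.eigenvectorUnitary hHY : Matrix Y Y ℂ) with hW_def
  have hU1 : star U * U = 1 :=
    Matrix.mem_unitaryGroup_iff'.mp (Matrix.IsHermitian.eigenvectorUnitary hH).2
  have hU2 : U * star U = 1 :=
    Matrix.mem_unitaryGroup_iff.mp (Matrix.IsHermitian.eigenvectorUnitary hH).2
  have hV1 : star V * V = 1 :=
    Matrix.mem_unitaryGroup_iff'.mp (Matrix.IsHermitian.eigenvectorUnitary hHX).2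
  have hV2 : V * star V = 1 :=
    Matrix.mem_unitaryGroup_iff.mp (Matrix.IsHermitian.eigenvectorUnitary hHX).2
  have hW1 : star W * W = 1 :=
    Matrix.mem_unitaryGroup_iff'.mp (Matrix.IsHermitian.eigenvectorUnitary hHY).2
  have hW2 : W * star W = 1 :=
    Matrix.mem_unitaryGroup_iff.mp (Matrix.IsHermitian.eigenvectorUnitary hHY).2
  have hspec : ρ = U * Matrix.diagonal (RCLike.ofReal ∘ p) * star U := hH.spectral_theorem
  have hdiagX : star V * (ptraceRight ρ) * V = Matrix.diagonal (RCLike.ofReal ∘ a) :=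
    by have h := hHX.conjStarAlgAut_star_eigenvectorUnitary
       rw [Unitary.conjStarAlgAut_star_apply] at h; exact h
  have hdiagY : star W * (ptraceLeft ρ) * W = Matrix.diagonal (RCLike.ofReal ∘ b) :=
    by have h := hHY.conjStarAlgAut_star_eigenvectorUnitary
       rw [Unitary.conjStarAlgAut_star_apply] at h; exact h
  -- The Kronecker product V ⊗ W and the mixing unitary G
  set F : Matrix (X × Y) (X × Y) ℂ := V ⊗ₖ W with hF_def
  have hFstar : star F = (star V) ⊗ₖ (star W) := by
    ext m k
    cases m; cases k
    simp only [hF_def, Matrix.star_apply, kroneckerMap_apply, star_mul']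
    try ring
  have hFs1 : star F * F = 1 := by
    rw [hFstar, hF_def, ← Matrix.mul_kronecker_mul, hV1, hW1, Matrix.one_kronecker_one]
  have hFs2 : F * star F = 1 := by
    rw [hFstar, hF_def, ← Matrix.mul_kronecker_mul, hV2, hW2, Matrix.one_kronecker_one]
  set G : Matrix (X × Y) (X × Y) ℂ := star F * U with hG_def
  have hGstar : star G = star U * F := by rw [hG_def, Matrix.star_mul, star_star]
  have hG1 : star G * G = 1 := by
    rw [hGstar, hG_def, Matrix.mul_assoc, ← Matrix.mul_assoc F (star F) U, hFs2,
      Matrix.one_mul, hU1]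
  have hG2 : G * star G = 1 := by
    rw [hGstar, hG_def, Matrix.mul_assoc, ← Matrix.mul_assoc U (star U) F, hU2,
      Matrix.one_mul, hFs1]
  -- conjugated density matrix
  have hFρF : star F * ρ * F = G * Matrix.diagonal (RCLike.ofReal ∘ p) * star G := by
    rw [hspec, hGstar, hG_def]
    simp only [Matrix.mul_assoc]
  set P : (X × Y) → (X × Y) → ℝ := fun m k => Complex.normSq (G m k) with hP_def
  set c : (X × Y) → ℝ := fun m => ∑ k, P m k * p k with hc_def
  have hPnn : ∀ m k, 0 ≤ P m k := fun m k => Complex.normSq_nonneg _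
  have hpnn : ∀ k, 0 ≤ p k := fun k => hPSD.eigenvalues_nonneg k
  have hann : ∀ i, 0 ≤ a i := fun i => hXpsd.eigenvalues_nonneg i
  have hbnn : ∀ j, 0 ≤ b j := fun j => hYpsd.eigenvalues_nonneg j
  have hcnn : ∀ m, 0 ≤ c m :=
    fun m => Finset.sum_nonneg fun k _ => mul_nonneg (hPnn m k) (hpnn k)
  -- diagonal entries of the conjugated density matrix
  have hc : ∀ m, (star F * ρ * F) m m = (c m : ℂ) := by
    intro m
    rw [hFρF, Matrix.mul_apply]
    simp only [hc_def, hP_def]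
    push_cast
    refine Finset.sum_congr rfl fun k _ => ?_
    rw [Matrix.mul_diagonal]
    simp only [Matrix.star_apply, Function.comp_apply]
    rw [Complex.normSq_eq_conj_mul_self, RCLike.star_def]
    push_cast
    rw [mul_right_comm, mul_comm (G m k)]
    rfl
  -- row sums of P
  have hrowP : ∀ m, ∑ k, P m k = 1 := by
    intro m
    have h1 : (G * star G) m m = 1 := by rw [hG2, Matrix.one_apply_eq]
    rw [Matrix.mul_apply] at h1
    have : (↑(∑ k, P m k) : ℂ) = 1 := by
      push_cast
      rw [← h1]
      refine Finset.sum_congr rfl fun k _ => ?_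
      simp only [Matrix.star_apply, hP_def]
      rw [Complex.normSq_eq_conj_mul_self]
      exact mul_comm _ _
    exact_mod_cast this
  have hcolP : ∀ k, ∑ m, P m k = 1 := by
    intro k
    have h1 : (star G * G) k k = 1 := by rw [hG1, Matrix.one_apply_eq]
    rw [Matrix.mul_apply] at h1
    have : (↑(∑ m, P m k) : ℂ) = 1 := by
      push_cast
      rw [← h1]
      refine Finset.sum_congr rfl fun m _ => ?_
      simp only [Matrix.star_apply, hP_def]
      rw [Complex.normSq_eq_conj_mul_self]
      rfl
    exact_mod_cast this
  -- normalization
  have hps : ∑ k, p k = 1 := sum_eigenvalues_eq_one hH htr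
  have has : ∑ i, a i = 1 := sum_eigenvalues_eq_one hHX ((ptraceRight_trace ρ).trans htr)
  have hbs : ∑ j, b j = 1 := sum_eigenvalues_eq_one hHY ((ptraceLeft_trace ρ).trans htr)
  -- marginals of c
  have hmargX : ptraceRight (star F * ρ * F) = Matrix.diagonal (RCLike.ofReal ∘ a) := by
    rw [hFstar, hF_def, ptraceRight_conj ρ (star V) V (star W) W hW2, hdiagX]
  have hmargY : ptraceLeft (star F * ρ * F) = Matrix.diagonal (RCLike.ofReal ∘ b) := by
    rw [hFstar, hF_def, ptraceLeft_conj ρ (star V) V (star W) W hV2, hdiagY]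
  have hca : ∀ i, ∑ j, c (i, j) = a i := by
    intro i
    have h1 : (↑(∑ j, c (i, j)) : ℂ) = (a i : ℂ) := by
      push_cast
      calc ∑ j, (c (i, j) : ℂ) = ∑ j, (star F * ρ * F) (i, j) (i, j) :=
            Finset.sum_congr rfl fun j _ => (hc (i, j)).symm
        _ = ptraceRight (star F * ρ * F) i i := rfl
        _ = (a i : ℂ) := by rw [hmargX]; simp [Matrix.diagonal_apply_eq]
    exact_mod_cast h1
  have hcb : ∀ j, ∑ i, c (i, j) = b j := by
    intro j
    have h1 : (↑(∑ i, c (i, j)) : ℂ) = (b j : ℂ) := by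
      push_cast
      calc ∑ i, (c (i, j) : ℂ) = ∑ i, (star F * ρ * F) (i, j) (i, j) :=
            Finset.sum_congr rfl fun i _ => (hc (i, j)).symm
        _ = ptraceLeft (star F * ρ * F) j j := rfl
        _ = (b j : ℂ) := by rw [hmargY]; simp [Matrix.diagonal_apply_eq]
    exact_mod_cast h1
  -- support condition
  have hc0 : ∀ i j, a i * b j = 0 → c (i, j) = 0 := by
    intro i j hab
    rcases mul_eq_zero.mp hab with h0 | h0
    · have hle : c (i, j) ≤ ∑ j', c (i, j') :=
        Finset.single_le_sum (fun j' _ => hcnn (i, j')) (Finset.mem_univ j)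
      rw [hca i, h0] at hle
      exact le_antisymm hle (hcnn (i, j))
    · have hle : c (i, j) ≤ ∑ i', c (i', j) :=
        Finset.single_le_sum (fun i' _ => hcnn (i', j)) (Finset.mem_univ i)
      rw [hcb j, h0] at hle
      exact le_antisymm hle (hcnn (i, j))
  have hsupp : ∀ m : X × Y, a m.1 * b m.2 = 0 → ∀ k, P m k * p k = 0 := by
    rintro ⟨i, j⟩ hab k
    have h0 : c (i, j) = 0 := hc0 i j hab
    have := (Finset.sum_eq_zero_iff_of_nonneg
      (fun k' _ => mul_nonneg (hPnn (i, j) k') (hpnn k'))).mp h0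
    exact this k (Finset.mem_univ k)
  -- Klein inequality
  have klein := klein_aux p (fun m : X × Y => a m.1 * b m.2) P hpnn
    (fun m => mul_nonneg (hann m.1) (hbnn m.2)) hPnn hrowP hcolP hps
    (by rw [Fintype.sum_prod_type]
        simp only [← Finset.mul_sum]
        rw [← Finset.sum_mul, has, hbs, one_mul])
    hsupp
  have hclog : ∑ m : X × Y, c m * Real.log (a m.1 * b m.2)
      = ∑ i, a i * Real.log (a i) + ∑ j, b j * Real.log (b j) :=
    sum_mul_log_prod a b c hc0 hca hcb
  -- assemble
  rw [vnEntropy, vnEntropy, vnEntropy, dif_pos hH, dif_pos hHX, dif_pos hHY]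
  have hkc : ∑ m : X × Y, c m * Real.log (a m.1 * b m.2) ≤ ∑ k, p k * Real.log (p k) := by
    calc ∑ m : X × Y, c m * Real.log (a m.1 * b m.2)
        = ∑ m : X × Y, (∑ k, P m k * p k) * Real.log (a m.1 * b m.2) := rfl
      _ ≤ ∑ k, p k * Real.log (p k) := klein
  rw [hclog] at hkc
  simp only [Real.negMulLog, neg_mul, Finset.sum_neg_distrib]
  linarith [hkc]
end

section
/- In any quantum secret sharing scheme realizing an access structure in which the complement of every authorized set is unauthorized and the full player set is authorized, the secrecy requirement I(R:A)=0 for all unauthorized A that are complements of authorized sets follows from the recoverability requirement, given that the global state on R together with all shares is pure. -/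
open scoped Classical
open Matrix Kronecker ComplexOrder

/-- Marginal on `R` of a state on `R ⊗ A ⊗ B`. -/
noncomputable def margR {R A B : Type*} [Fintype R] [Fintype A] [Fintype B]
    (ρ : Matrix (R × A × B) (R × A × B) ℂ) : Matrix R R ℂ :=
  Matrix.of fun i j => ∑ p : A × B, ρ (i, p) (j, p)

/-- Marginal on `A` of a state on `R ⊗ A ⊗ B`. -/
noncomputable def margA {R A B : Type*} [Fintype R] [Fintype A] [Fintype B]
    (ρ : Matrix (R × A × B) (R × A × B) ℂ) : Matrix A A ℂ :=
  Matrix.of fun i j => ∑ r, ∑ b, ρ (r, i, b) (r, j, b)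

/-- Marginal on `RA` of a state on `R ⊗ A ⊗ B`. -/
noncomputable def margRA {R A B : Type*} [Fintype R] [Fintype A] [Fintype B]
    (ρ : Matrix (R × A × B) (R × A × B) ℂ) : Matrix (R × A) (R × A) ℂ :=
  Matrix.of fun i j => ∑ b, ρ (i.1, i.2, b) (j.1, j.2, b)

/-- Marginal on `RB` of a state on `R ⊗ A ⊗ B`. -/
noncomputable def margRB {R A B : Type*} [Fintype R] [Fintype A] [Fintype B]
    (ρ : Matrix (R × A × B) (R × A × B) ℂ) : Matrix (R × B) (R × B) ℂ :=
  Matrix.of fun i j => ∑ a, ρ (i.1, a, i.2) (j.1, a, j.2)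


section AuxSecrecy
set_option linter.unusedSectionVars false

variable {n m : Type*} [Fintype n] [Fintype m] [DecidableEq n] [DecidableEq m]

private lemma my_charpoly_unit_conj (u : (Matrix n n ℂ)ˣ) (M : Matrix n n ℂ) :
    ((↑u : Matrix n n ℂ) * M * (↑u⁻¹ : Matrix n n ℂ)).charpoly = M.charpoly := by
  let f : Matrix n n ℂ →+* Matrix n n (Polynomial ℂ) := (Polynomial.C : ℂ →+* Polynomial ℂ).mapMatrix
  have hch : Matrix.charmatrix ((↑u : Matrix n n ℂ) * M * (↑u⁻¹ : Matrix n n ℂ))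
      = f ↑u * Matrix.charmatrix M * f ↑u⁻¹ := by
    unfold Matrix.charmatrix
    rw [mul_sub, sub_mul, _root_.map_mul, _root_.map_mul]
    congr 1
    have hc : Commute (f ↑u) ((Matrix.scalar n) (Polynomial.X : Polynomial ℂ)) :=
      (Matrix.scalar_commute (Polynomial.X : Polynomial ℂ) (fun r => Commute.all _ _) (f ↑u)).symm
    rw [hc.eq, mul_assoc, ← _root_.map_mul, Units.mul_inv, _root_.map_one, mul_one]
  have hdet : (f ↑u).det * (f ↑u⁻¹).det = 1 := by
    rw [← Matrix.det_mul, ← _root_.map_mul, Units.mul_inv, _root_.map_one, Matrix.det_one]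
  unfold Matrix.charpoly
  rw [hch, Matrix.det_mul, Matrix.det_mul]
  calc (f ↑u).det * (Matrix.charmatrix M).det * (f ↑u⁻¹).det
      = (Matrix.charmatrix M).det * ((f ↑u).det * (f ↑u⁻¹).det) := by ring
    _ = (Matrix.charmatrix M).det := by rw [hdet, mul_one]

private lemma my_charpoly_diagonal (d : n → ℂ) :
    (Matrix.diagonal d).charpoly = ∏ i, (Polynomial.X - Polynomial.C (d i)) := by
  unfold Matrix.charpoly
  have : Matrix.charmatrix (Matrix.diagonal d)
      = Matrix.diagonal (fun i => Polynomial.X - Polynomial.C (d i)) := by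
    ext i j
    by_cases h : i = j
    · subst h; simp [Matrix.charmatrix_apply_eq]
    · simp [Matrix.charmatrix_apply_ne _ _ _ h, Matrix.diagonal_apply_ne _ h]
  rw [this, Matrix.det_diagonal]

private lemma my_unit_of_unitary {U : Matrix n n ℂ} (hU : U ∈ Matrix.unitaryGroup n ℂ) :
    ∃ u : (Matrix n n ℂ)ˣ, (↑u : Matrix n n ℂ) = U ∧ (↑u⁻¹ : Matrix n n ℂ) = star U := by
  refine ⟨⟨U, star U, ?_, ?_⟩, rfl, rfl⟩
  · exact (Matrix.mem_unitaryGroup_iff).mp hU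
  · exact (Matrix.mem_unitaryGroup_iff').mp hU

private lemma my_herm_charpoly {M : Matrix n n ℂ} (hM : M.IsHermitian) :
    M.charpoly = ∏ i, (Polynomial.X - Polynomial.C ((hM.eigenvalues i : ℝ) : ℂ)) := by
  obtain ⟨u, hu, hui⟩ := my_unit_of_unitary (hM.eigenvectorUnitary).2
  have hsp := hM.spectral_theorem
  rw [Unitary.conjStarAlgAut_apply] at hsp
  rw [← hu] at hsp hui
  rw [← hui] at hsp
  conv_lhs => rw [hsp]
  rw [my_charpoly_unit_conj, my_charpoly_diagonal]
  rfl

private lemma my_herm_roots {M : Matrix n n ℂ} (hM : M.IsHermitian) :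
    M.charpoly.roots = Finset.univ.val.map (fun i => ((hM.eigenvalues i : ℝ) : ℂ)) := by
  rw [my_herm_charpoly hM]
  have : (∏ i, (Polynomial.X - Polynomial.C ((hM.eigenvalues i : ℝ) : ℂ)))
      = ((Finset.univ.val.map (fun i => ((hM.eigenvalues i : ℝ) : ℂ))).map
          (fun a => Polynomial.X - Polynomial.C a)).prod := by
    rw [Multiset.map_map]
    rfl
  rw [this, Polynomial.roots_multiset_prod_X_sub_C]

private lemma my_sum_negMulLog {M : Matrix n n ℂ} (hM : M.IsHermitian) :
    ∑ i, Real.negMulLog (hM.eigenvalues i)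
      = (M.charpoly.roots.map (fun z => Real.negMulLog z.re)).sum := by
  rw [my_herm_roots hM, Multiset.map_map]
  simp only [Function.comp_def, Complex.ofReal_re]
  rfl

private lemma my_trace_eq_sum_eigs {M : Matrix n n ℂ} (hM : M.IsHermitian) :
    M.trace = ∑ i, ((hM.eigenvalues i : ℝ) : ℂ) := by
  conv_lhs => rw [hM.spectral_theorem, Unitary.conjStarAlgAut_apply]
  rw [Matrix.trace_mul_cycle]
  rw [(Matrix.mem_unitaryGroup_iff').mp (hM.eigenvectorUnitary).2, one_mul, Matrix.trace_diagonal]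
  rfl

private lemma my_kron_conjTranspose (P : Matrix n n ℂ) (Q : Matrix m m ℂ) :
    (P ⊗ₖ Q)ᴴ = Pᴴ ⊗ₖ Qᴴ := by
  ext i j
  simp [Matrix.conjTranspose_apply, Matrix.kroneckerMap_apply, mul_comm]

private lemma my_kron_isHermitian {P : Matrix n n ℂ} {Q : Matrix m m ℂ}
    (hP : P.IsHermitian) (hQ : Q.IsHermitian) : (P ⊗ₖ Q).IsHermitian := by
  unfold Matrix.IsHermitian
  rw [my_kron_conjTranspose, hP.eq, hQ.eq]

private lemma my_charpoly_kron {P : Matrix n n ℂ} {Q : Matrix m m ℂ}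
    (hP : P.IsHermitian) (hQ : Q.IsHermitian) :
    (P ⊗ₖ Q).charpoly
      = ∏ p : n × m,
          (Polynomial.X - Polynomial.C ((hP.eigenvalues p.1 * hQ.eigenvalues p.2 : ℝ) : ℂ)) := by
  set U : Matrix n n ℂ := ↑hP.eigenvectorUnitary
  set V : Matrix m m ℂ := ↑hQ.eigenvectorUnitary
  have hU : U * star U = 1 := (Matrix.mem_unitaryGroup_iff).mp (hP.eigenvectorUnitary).2
  have hU' : star U * U = 1 := (Matrix.mem_unitaryGroup_iff').mp (hP.eigenvectorUnitary).2
  have hV : V * star V = 1 := (Matrix.mem_unitaryGroup_iff).mp (hQ.eigenvectorUnitary).2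
  have hV' : star V * V = 1 := (Matrix.mem_unitaryGroup_iff').mp (hQ.eigenvectorUnitary).2
  have hmul1 : (U ⊗ₖ V) * ((star U) ⊗ₖ (star V)) = 1 := by
    rw [← Matrix.mul_kronecker_mul, hU, hV, Matrix.one_kronecker_one]
  have hmul2 : ((star U) ⊗ₖ (star V)) * (U ⊗ₖ V) = 1 := by
    rw [← Matrix.mul_kronecker_mul, hU', hV', Matrix.one_kronecker_one]
  set u : (Matrix (n × m) (n × m) ℂ)ˣ := ⟨U ⊗ₖ V, (star U) ⊗ₖ (star V), hmul1, hmul2⟩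
  have hsp : P ⊗ₖ Q = (↑u : Matrix (n × m) (n × m) ℂ)
      * Matrix.diagonal (fun p : n × m => ((hP.eigenvalues p.1 * hQ.eigenvalues p.2 : ℝ) : ℂ))
      * (↑u⁻¹ : Matrix (n × m) (n × m) ℂ) := by
    show P ⊗ₖ Q = (U ⊗ₖ V) * _ * ((star U) ⊗ₖ (star V))
    conv_lhs => rw [hP.spectral_theorem, hQ.spectral_theorem, Unitary.conjStarAlgAut_apply,
      Unitary.conjStarAlgAut_apply]
    rw [Matrix.mul_kronecker_mul, Matrix.mul_kronecker_mul, Matrix.diagonal_kronecker_diagonal]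
    congr 2
    ext p
    simp
  rw [hsp, my_charpoly_unit_conj, my_charpoly_diagonal]

private lemma my_vnEntropy_kron {P : Matrix n n ℂ} {Q : Matrix m m ℂ}
    (hP : P.IsHermitian) (hQ : Q.IsHermitian)
    (htP : P.trace = 1) (htQ : Q.trace = 1) :
    vnEntropy (P ⊗ₖ Q) = vnEntropy P + vnEntropy Q := by
  have hPQ := my_kron_isHermitian hP hQ
  have hsP : ∑ i, hP.eigenvalues i = 1 := by
    have h := my_trace_eq_sum_eigs hP
    rw [htP] at h
    have h2 : ((∑ i, hP.eigenvalues i : ℝ) : ℂ) = 1 := by push_cast; exact h.symm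
    exact_mod_cast h2
  have hsQ : ∑ i, hQ.eigenvalues i = 1 := by
    have h := my_trace_eq_sum_eigs hQ
    rw [htQ] at h
    have h2 : ((∑ i, hQ.eigenvalues i : ℝ) : ℂ) = 1 := by push_cast; exact h.symm
    exact_mod_cast h2
  rw [vnEntropy, vnEntropy, vnEntropy, dif_pos hP, dif_pos hQ, dif_pos hPQ]
  have hroots : ((P ⊗ₖ Q).charpoly.roots.map (fun z => Real.negMulLog z.re)).sum
      = ∑ p : n × m, Real.negMulLog (hP.eigenvalues p.1 * hQ.eigenvalues p.2) := by
    have hr : (P ⊗ₖ Q).charpoly.roots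
        = Finset.univ.val.map
            (fun p : n × m => ((hP.eigenvalues p.1 * hQ.eigenvalues p.2 : ℝ) : ℂ)) := by
      rw [my_charpoly_kron hP hQ]
      have : (∏ p : n × m,
            (Polynomial.X - Polynomial.C ((hP.eigenvalues p.1 * hQ.eigenvalues p.2 : ℝ) : ℂ)))
          = ((Finset.univ.val.map
              (fun p : n × m => ((hP.eigenvalues p.1 * hQ.eigenvalues p.2 : ℝ) : ℂ))).map
              (fun a => Polynomial.X - Polynomial.C a)).prod := by
        rw [Multiset.map_map]
        rfl
      rw [this, Polynomial.roots_multiset_prod_X_sub_C]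
    rw [hr, Multiset.map_map]
    simp only [Function.comp_def, Complex.ofReal_re]
    rfl
  rw [my_sum_negMulLog hPQ, hroots]
  rw [Fintype.sum_prod_type]
  have expand : ∀ i, ∑ j, Real.negMulLog (hP.eigenvalues i * hQ.eigenvalues j)
      = Real.negMulLog (hP.eigenvalues i)
        + hP.eigenvalues i * ∑ j, Real.negMulLog (hQ.eigenvalues j) := by
    intro i
    calc ∑ j, Real.negMulLog (hP.eigenvalues i * hQ.eigenvalues j)
        = ∑ j, (hQ.eigenvalues j * Real.negMulLog (hP.eigenvalues i)
            + hP.eigenvalues i * Real.negMulLog (hQ.eigenvalues j)) :=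
          Finset.sum_congr rfl (fun j _ => Real.negMulLog_mul _ _)
      _ = (∑ j, hQ.eigenvalues j) * Real.negMulLog (hP.eigenvalues i)
            + hP.eigenvalues i * ∑ j, Real.negMulLog (hQ.eigenvalues j) := by
          rw [Finset.sum_add_distrib, Finset.sum_mul, Finset.mul_sum]
      _ = _ := by rw [hsQ, one_mul]
  rw [Finset.sum_congr rfl (fun i _ => expand i), Finset.sum_add_distrib,
    ← Finset.sum_mul, hsP, one_mul]

private lemma my_sum_swap3 {α β γ : Type*} [Fintype α] [Fintype β] [Fintype γ]
    (f : α → β → γ → ℂ) :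
    ∑ a, ∑ b, ∑ c, f a b c = ∑ c, ∑ b, ∑ a, f a b c := by
  calc ∑ a, ∑ b, ∑ c, f a b c
      = ∑ a, ∑ c, ∑ b, f a b c := Finset.sum_congr rfl fun a _ => Finset.sum_comm
    _ = ∑ c, ∑ a, ∑ b, f a b c := Finset.sum_comm
    _ = ∑ c, ∑ b, ∑ a, f a b c := Finset.sum_congr rfl fun c _ => Finset.sum_comm

private lemma my_sum_swap4 {α β γ δ : Type*} [Fintype α] [Fintype β] [Fintype γ] [Fintype δ]
    (f : α → β → γ → δ → ℂ) :
    ∑ a, ∑ b, ∑ c, ∑ d, f a b c d = ∑ c, ∑ d, ∑ a, ∑ b, f a b c d := by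
  calc ∑ a, ∑ b, ∑ c, ∑ d, f a b c d
      = ∑ a, ∑ c, ∑ b, ∑ d, f a b c d :=
        Finset.sum_congr rfl fun a _ => Finset.sum_comm
    _ = ∑ c, ∑ a, ∑ b, ∑ d, f a b c d := Finset.sum_comm
    _ = ∑ c, ∑ a, ∑ d, ∑ b, f a b c d :=
        Finset.sum_congr rfl fun c _ => Finset.sum_congr rfl fun a _ => Finset.sum_comm
    _ = ∑ c, ∑ d, ∑ a, ∑ b, f a b c d :=
        Finset.sum_congr rfl fun c _ => Finset.sum_comm

private lemma my_rank_one_family {ι V : Type*} [Fintype ι] [Fintype V] (v : ι → V → ℂ) (φ : V → ℂ)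
    (hφ : ∑ x, φ x * star (φ x) = 1)
    (h : ∀ x y, ∑ t, v t x * star (v t y) = φ x * star (φ y)) :
    ∀ t x, v t x = (∑ y, star (φ y) * v t y) * φ x := by
  set c : ι → ℂ := fun t => ∑ y, star (φ y) * v t y with hc
  have hstarc : ∀ t, star (c t) = ∑ y, φ y * star (v t y) := by
    intro t
    rw [hc]
    simp only [star_sum, star_mul', star_star]
  have hcv : ∀ t, ∑ x, v t x * star (φ x) = c t := by
    intro t
    rw [hc]
    exact Finset.sum_congr rfl (fun y _ => mul_comm _ _)
  have hvv : ∑ t, ∑ x, v t x * star (v t x) = 1 := by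
    rw [Finset.sum_comm]
    calc ∑ x, ∑ t, v t x * star (v t x) = ∑ x, φ x * star (φ x) :=
          Finset.sum_congr rfl (fun x _ => h x x)
      _ = 1 := hφ
  have hcc : ∑ t, c t * star (c t) = 1 := by
    have step : ∀ t, c t * star (c t)
        = ∑ y, ∑ x, (star (φ y) * φ x) * (v t y * star (v t x)) := by
      intro t
      rw [hc, hstarc, Finset.sum_mul_sum]
      exact Finset.sum_congr rfl fun y _ => Finset.sum_congr rfl fun x _ => by ring
    calc ∑ t, c t * star (c t)
        = ∑ t, ∑ y, ∑ x, (star (φ y) * φ x) * (v t y * star (v t x)) :=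
          Finset.sum_congr rfl fun t _ => step t
      _ = ∑ y, ∑ x, (star (φ y) * φ x) * ∑ t, (v t y * star (v t x)) := by
          rw [Finset.sum_comm]
          refine Finset.sum_congr rfl fun y _ => ?_
          rw [Finset.sum_comm]
          refine Finset.sum_congr rfl fun x _ => ?_
          rw [Finset.mul_sum]
      _ = ∑ y, ∑ x, (star (φ y) * φ y) * (φ x * star (φ x)) := by
          refine Finset.sum_congr rfl fun y _ => Finset.sum_congr rfl fun x _ => ?_
          rw [h]
          ring
      _ = (∑ y, star (φ y) * φ y) * (∑ x, φ x * star (φ x)) := by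
          rw [Finset.sum_mul_sum]
      _ = 1 := by
          rw [hφ, mul_one]
          calc ∑ y, star (φ y) * φ y = ∑ y, φ y * star (φ y) :=
                Finset.sum_congr rfl fun y _ => mul_comm _ _
            _ = 1 := hφ
  have per_t : ∀ t, ∑ x, (v t x - c t * φ x) * star (v t x - c t * φ x)
      = (∑ x, v t x * star (v t x)) - c t * star (c t) := by
    intro t
    have expand : ∀ x, (v t x - c t * φ x) * star (v t x - c t * φ x)
        = v t x * star (v t x) - (v t x * star (φ x)) * star (c t)
          - c t * (φ x * star (v t x)) + (c t * star (c t)) * (φ x * star (φ x)) := by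
      intro x
      simp only [star_sub, star_mul']
      ring
    rw [Finset.sum_congr rfl fun x _ => expand x]
    rw [Finset.sum_add_distrib, Finset.sum_sub_distrib, Finset.sum_sub_distrib,
      ← Finset.sum_mul, ← Finset.mul_sum, ← Finset.mul_sum, hcv, ← hstarc, hφ, mul_one]
    ring
  have hT : ∑ t, ∑ x, (v t x - c t * φ x) * star (v t x - c t * φ x) = 0 := by
    rw [Finset.sum_congr rfl fun t _ => per_t t, Finset.sum_sub_distrib, hvv, hcc, sub_self]
  have hTre : ∑ t, ∑ x, Complex.normSq (v t x - c t * φ x) = 0 := by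
    have : ((∑ t, ∑ x, Complex.normSq (v t x - c t * φ x) : ℝ) : ℂ) = 0 := by
      push_cast
      rw [← hT]
      exact Finset.sum_congr rfl fun t _ => Finset.sum_congr rfl fun x _ =>
        (Complex.mul_conj _).symm
    exact_mod_cast this
  intro t x
  have h0 : ∀ t ∈ Finset.univ, ∑ x, Complex.normSq (v t x - c t * φ x) = 0 := by
    rw [← Finset.sum_eq_zero_iff_of_nonneg]
    · exact hTre
    · intro t _
      exact Finset.sum_nonneg fun x _ => Complex.normSq_nonneg _
  have h00 : ∀ x ∈ Finset.univ, Complex.normSq (v t x - c t * φ x) = 0 := by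
    rw [← Finset.sum_eq_zero_iff_of_nonneg]
    · exact h0 t (Finset.mem_univ t)
    · intro x _
      exact Complex.normSq_nonneg _
  have hz := Complex.normSq_eq_zero.mp (h00 x (Finset.mem_univ x))
  have hz2 := sub_eq_zero.mp hz
  rw [hz2]

private lemma my_unitvec_complex {V : Type*} [Fintype V] (ψ : V → ℂ)
    (hψ : IsUnitVec ψ) : ∑ x, ψ x * star (ψ x) = 1 := by
  have h1 : ((∑ x, ‖ψ x‖ ^ 2 : ℝ) : ℂ) = 1 := by rw [hψ]; norm_num
  rw [← h1]
  push_cast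
  refine Finset.sum_congr rfl fun x _ => ?_
  rw [Complex.star_def, Complex.mul_conj]
  norm_cast
  rw [Complex.normSq_eq_norm_sq]

end AuxSecrecy

/-- recoverability implies secrecy for access structures in which the
complement of every authorized set is unauthorized. Concretely: the shares split as
`A` (an unauthorized set, the complement of an authorized set) and `B = A'`
(its complement, authorized); the global state `|R P₁ … P_m⟩` is pure, and the
authorized complement `B` can recover the secret via a CPTP map `T_B` (Kraus
operators `K`) with `(id_R ⊗ T_B)(ρ_{RB}) = |RS⟩⟨RS|`. Then secrecy holds:
`ρ_{RA} = ρ_R ⊗ ρ_A`, i.e. `I(R:A) = 0`. -/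
theorem recoverability_implies_secrecy {R A B S : Type*}
    [Fintype R] [Fintype A] [Fintype B] [Fintype S]
    [DecidableEq R] [DecidableEq A] [DecidableEq B] [DecidableEq S]
    (ρ : Matrix (R × A × B) (R × A × B) ℂ)
    (hpureGlobal : ∃ Ψ : R × A × B → ℂ, IsUnitVec Ψ ∧ ρ = Matrix.vecMulVec Ψ (star Ψ))
    (ι : Type) [Fintype ι] (K : ι → Matrix S B ℂ)
    (hKraus : ∑ k, (K k)ᴴ * K k = 1)
    (φ : R × S → ℂ) (hφ : IsUnitVec φ)
    (hrec : ∑ k, ((1 : Matrix R R ℂ) ⊗ₖ K k) * margRB ρ * ((1 : Matrix R R ℂ) ⊗ₖ K k)ᴴ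
            = Matrix.vecMulVec φ (star φ)) :
    margRA ρ = (margR ρ) ⊗ₖ (margA ρ) ∧
      vnEntropy (margR ρ) + vnEntropy (margA ρ) - vnEntropy (margRA ρ) = 0 := by
  classical
  obtain ⟨Ψ, hΨ, rfl⟩ := hpureGlobal
  have hφ1 : ∑ x, φ x * star (φ x) = 1 := my_unitvec_complex φ hφ
  have hΨ1 : ∑ e, Ψ e * star (Ψ e) = 1 := my_unitvec_complex Ψ hΨ
  set w : ι × A → R × S → ℂ := fun t x => ∑ b, K t.1 x.2 b * Ψ (x.1, t.2, b) with hwdef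
  have hk : ∀ (k : ι) (x y : R × S),
      (((1 : Matrix R R ℂ) ⊗ₖ K k) * margRB (Matrix.vecMulVec Ψ (star Ψ))
        * ((1 : Matrix R R ℂ) ⊗ₖ K k)ᴴ) x y
      = ∑ a, w (k, a) x * star (w (k, a) y) := by
    intro k x y
    simp only [hwdef]
    simp only [Matrix.mul_apply, Matrix.conjTranspose_apply, Matrix.kroneckerMap_apply,
      Matrix.one_apply, margRB, Matrix.of_apply, Matrix.vecMulVec_apply, Pi.star_apply,
      Fintype.sum_prod_type, ite_mul, one_mul, zero_mul, mul_ite, mul_zero, mul_one,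
      apply_ite (star : ℂ → ℂ), star_zero, star_mul',
      Finset.sum_ite_irrel, Finset.sum_const_zero, Finset.sum_ite_eq, Finset.sum_ite_eq',
      Finset.mem_univ, if_true, star_sum, Finset.sum_mul, Finset.mul_sum]
    rw [my_sum_swap3]
    refine Finset.sum_congr rfl fun a _ => ?_
    rw [Finset.sum_comm]
    refine Finset.sum_congr rfl fun b2 _ => Finset.sum_congr rfl fun b1 _ => by ring
  have h1 : ∀ x y : R × S, ∑ t : ι × A, w t x * star (w t y) = φ x * star (φ y) := by
    intro x y
    have e : (∑ k, ((1 : Matrix R R ℂ) ⊗ₖ K k) * margRB (Matrix.vecMulVec Ψ (star Ψ))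
        * ((1 : Matrix R R ℂ) ⊗ₖ K k)ᴴ) x y = Matrix.vecMulVec φ (star φ) x y := by
      rw [hrec]
    rw [Matrix.sum_apply] at e
    rw [Fintype.sum_prod_type]
    calc ∑ k, ∑ a, w (k, a) x * star (w (k, a) y)
        = ∑ k, (((1 : Matrix R R ℂ) ⊗ₖ K k) * margRB (Matrix.vecMulVec Ψ (star Ψ))
            * ((1 : Matrix R R ℂ) ⊗ₖ K k)ᴴ) x y :=
          Finset.sum_congr rfl fun k _ => (hk k x y).symm
      _ = Matrix.vecMulVec φ (star φ) x y := e
      _ = φ x * star (φ y) := by simp [Matrix.vecMulVec_apply]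
  set c : ι × A → ℂ := fun t => ∑ y, star (φ y) * w t y with hcdef
  have hw : ∀ t x, w t x = c t * φ x := by
    intro t x
    exact my_rank_one_family w φ hφ1 h1 t x
  have hKd : ∀ b b' : B, ∑ k, ∑ s, star (K k s b') * K k s b
      = if b' = b then 1 else 0 := by
    intro b b'
    have e : (∑ k, (K k)ᴴ * K k) b' b = (1 : Matrix B B ℂ) b' b := by rw [hKraus]
    simpa [Matrix.sum_apply, Matrix.mul_apply, Matrix.conjTranspose_apply,
      Matrix.one_apply] using e
  set G : R → R → ℂ := fun r r' => ∑ s, φ (r, s) * star (φ (r', s)) with hGdef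
  set M : A → A → ℂ := fun a a' => ∑ k, c (k, a) * star (c (k, a')) with hMdef
  have key : ∀ r a r' a', (∑ b, Ψ (r, a, b) * star (Ψ (r', a', b))) = G r r' * M a a' := by
    intro r a r' a'
    have stepA : ∑ k, ∑ s, w (k, a) (r, s) * star (w (k, a') (r', s))
        = ∑ b, Ψ (r, a, b) * star (Ψ (r', a', b)) := by
      calc ∑ k, ∑ s, w (k, a) (r, s) * star (w (k, a') (r', s))
          = ∑ k, ∑ s, ∑ b, ∑ b', (Ψ (r, a, b) * star (Ψ (r', a', b')))
              * (star (K k s b') * K k s b) := by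
            refine Finset.sum_congr rfl fun k _ => Finset.sum_congr rfl fun s _ => ?_
            simp only [hwdef]
            rw [star_sum, Finset.sum_mul_sum]
            refine Finset.sum_congr rfl fun b _ => Finset.sum_congr rfl fun b' _ => ?_
            rw [star_mul']
            ring
        _ = ∑ b, ∑ b', ∑ k, ∑ s, (Ψ (r, a, b) * star (Ψ (r', a', b')))
              * (star (K k s b') * K k s b) := my_sum_swap4 _
        _ = ∑ b, ∑ b', (Ψ (r, a, b) * star (Ψ (r', a', b')))
              * ∑ k, ∑ s, star (K k s b') * K k s b := by
            refine Finset.sum_congr rfl fun b _ => Finset.sum_congr rfl fun b' _ => ?_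
            simp only [Finset.mul_sum]
        _ = ∑ b, Ψ (r, a, b) * star (Ψ (r', a', b)) := by
            refine Finset.sum_congr rfl fun b _ => ?_
            rw [Finset.sum_congr rfl fun b' (_ : b' ∈ Finset.univ) => by rw [hKd b b']]
            simp
    have stepB : ∑ k, ∑ s, w (k, a) (r, s) * star (w (k, a') (r', s)) = G r r' * M a a' := by
      calc ∑ k, ∑ s, w (k, a) (r, s) * star (w (k, a') (r', s))
          = ∑ k, ∑ s, (c (k, a) * φ (r, s)) * star (c (k, a') * φ (r', s)) := by
            refine Finset.sum_congr rfl fun k _ => Finset.sum_congr rfl fun s _ => by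
              rw [hw, hw]
        _ = ∑ k, (c (k, a) * star (c (k, a'))) * ∑ s, φ (r, s) * star (φ (r', s)) := by
            refine Finset.sum_congr rfl fun k _ => ?_
            rw [Finset.mul_sum]
            exact Finset.sum_congr rfl fun s _ => by rw [star_mul']; ring
        _ = (∑ k, c (k, a) * star (c (k, a'))) * G r r' := by
            rw [← Finset.sum_mul]
        _ = G r r' * M a a' := by rw [hMdef]; ring
    rw [← stepA, stepB]
  have hRA : ∀ p q : R × A, margRA (Matrix.vecMulVec Ψ (star Ψ)) p q
      = G p.1 q.1 * M p.2 q.2 := by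
    intro p q
    show (∑ b, Matrix.vecMulVec Ψ (star Ψ) (p.1, p.2, b) (q.1, q.2, b)) = _
    simp only [Matrix.vecMulVec_apply, Pi.star_apply]
    exact key p.1 p.2 q.1 q.2
  set tG : ℂ := ∑ r, G r r with htGdef
  set tM : ℂ := ∑ a, M a a with htMdef
  have hR : ∀ r r', margR (Matrix.vecMulVec Ψ (star Ψ)) r r' = G r r' * tM := by
    intro r r'
    show (∑ p : A × B, Matrix.vecMulVec Ψ (star Ψ) (r, p) (r', p)) = _
    rw [Fintype.sum_prod_type]
    calc ∑ a, ∑ b, Matrix.vecMulVec Ψ (star Ψ) (r, a, b) (r', a, b)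
        = ∑ a, G r r' * M a a := by
          refine Finset.sum_congr rfl fun a _ => ?_
          simp only [Matrix.vecMulVec_apply, Pi.star_apply]
          exact key r a r' a
      _ = G r r' * tM := by rw [htMdef, Finset.mul_sum]
  have hA : ∀ a a', margA (Matrix.vecMulVec Ψ (star Ψ)) a a' = tG * M a a' := by
    intro a a'
    show (∑ r, ∑ b, Matrix.vecMulVec Ψ (star Ψ) (r, a, b) (r, a', b)) = _
    calc ∑ r, ∑ b, Matrix.vecMulVec Ψ (star Ψ) (r, a, b) (r, a', b)
        = ∑ r, G r r * M a a' := by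
          refine Finset.sum_congr rfl fun r _ => ?_
          simp only [Matrix.vecMulVec_apply, Pi.star_apply]
          exact key r a r a'
      _ = tG * M a a' := by rw [htGdef, Finset.sum_mul]
  have htr : tG * tM = 1 := by
    have h2 : ∑ r, ∑ a, G r r * M a a = 1 := by
      calc ∑ r, ∑ a, G r r * M a a
          = ∑ r, ∑ a, ∑ b, Ψ (r, a, b) * star (Ψ (r, a, b)) := by
            refine Finset.sum_congr rfl fun r _ => Finset.sum_congr rfl fun a _ => ?_
            rw [key r a r a]
        _ = ∑ e : R × A × B, Ψ e * star (Ψ e) := by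
            rw [Fintype.sum_prod_type]
            refine Finset.sum_congr rfl fun r _ => ?_
            rw [Fintype.sum_prod_type]
        _ = 1 := hΨ1
    calc tG * tM = ∑ r, G r r * tM := by rw [htGdef, Finset.sum_mul]
      _ = ∑ r, ∑ a, G r r * M a a := by
          refine Finset.sum_congr rfl fun r _ => ?_
          rw [htMdef, Finset.mul_sum]
      _ = 1 := h2
  have part1 : margRA (Matrix.vecMulVec Ψ (star Ψ))
      = margR (Matrix.vecMulVec Ψ (star Ψ)) ⊗ₖ margA (Matrix.vecMulVec Ψ (star Ψ)) := by
    ext p q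
    rw [Matrix.kroneckerMap_apply, hRA, hR, hA]
    calc G p.1 q.1 * M p.2 q.2 = (tG * tM) * (G p.1 q.1 * M p.2 q.2) := by
          rw [htr, one_mul]
      _ = (G p.1 q.1 * tM) * (tG * M p.2 q.2) := by ring
  have hGsym : ∀ r r', star (G r' r) = G r r' := by
    intro r r'
    rw [hGdef]
    simp only [star_sum, star_mul', star_star]
    exact Finset.sum_congr rfl fun s _ => mul_comm _ _
  have hMsym : ∀ a a', star (M a' a) = M a a' := by
    intro a a'
    rw [hMdef]
    simp only [star_sum, star_mul', star_star]
    exact Finset.sum_congr rfl fun k _ => mul_comm _ _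
  have htMstar : star tM = tM := by
    rw [htMdef]
    rw [star_sum]
    exact Finset.sum_congr rfl fun a _ => hMsym a a
  have htGstar : star tG = tG := by
    rw [htGdef]
    rw [star_sum]
    exact Finset.sum_congr rfl fun r _ => hGsym r r
  have hermR : (margR (Matrix.vecMulVec Ψ (star Ψ))).IsHermitian := by
    refine Matrix.IsHermitian.ext fun r r' => ?_
    rw [hR, hR, star_mul', htMstar, hGsym]
  have hermA : (margA (Matrix.vecMulVec Ψ (star Ψ))).IsHermitian := by
    refine Matrix.IsHermitian.ext fun a a' => ?_
    rw [hA, hA, star_mul', htGstar, hMsym]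
  have htrR : (margR (Matrix.vecMulVec Ψ (star Ψ))).trace = 1 := by
    rw [Matrix.trace]
    calc ∑ r, (margR (Matrix.vecMulVec Ψ (star Ψ))).diag r
        = ∑ r, G r r * tM := Finset.sum_congr rfl fun r _ => hR r r
      _ = tG * tM := by rw [htGdef, Finset.sum_mul]
      _ = 1 := htr
  have htrA : (margA (Matrix.vecMulVec Ψ (star Ψ))).trace = 1 := by
    rw [Matrix.trace]
    calc ∑ a, (margA (Matrix.vecMulVec Ψ (star Ψ))).diag a
        = ∑ a, tG * M a a := Finset.sum_congr rfl fun a _ => hA a a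
      _ = tG * tM := by rw [htMdef, Finset.mul_sum]
      _ = 1 := htr
  refine ⟨part1, ?_⟩
  rw [part1, my_vnEntropy_kron hermR hermA htrR htrA]
  ring
end
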